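/- Let c ≥ 1, μ ≥ 1 and δ > 0. Let φ : ℝ^c → ℝ^c be a homeomorphism with a fixed point x = φ(x) such that ‖φ⁻¹(y) − φ⁻¹(y')‖ ≤ μ·‖y − y'‖ for all y, y' in the closed ball of radius δ centered at x. Then there exist an integer k with 1 ≤ k ≤ (1 + 2μ)^c and vectors v_1, …, v_k ∈ ℝ^c with v_1 = 0 and ‖v_i‖ ≤ δ for every i, such that the closed ball of radius δ centered at x is contained in the union over i = 1, …, k of the translated images v_i + φ(B), where B is the open ball of radius δ centered at x. (This is the covering property underlying the construction of blending regions: the number k of translations depends only on the contraction bound μ and the dimension c.) -/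

import Mathlib

open Metric Set MeasureTheory Module
open scoped ENNReal

private lemma packing_aux (c : ℕ) (μ δ : ℝ) (hμ : 1 ≤ μ) (hδ : 0 < δ)
    (x : EuclideanSpace ℝ (Fin c)) (s : Finset (EuclideanSpace ℝ (Fin c)))
    (hs : ∀ p ∈ s, dist p x ≤ δ)
    (hsep : ∀ p ∈ s, ∀ q ∈ s, p ≠ q → δ / μ ≤ dist p q) :
    (s.card : ℝ) ≤ (1 + 2 * μ) ^ c := by
  have hμ0 : 0 < μ := lt_of_lt_of_le one_pos hμ
  let ν : Measure (EuclideanSpace ℝ (Fin c)) := volume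
  set ε : ℝ := δ / (2 * μ) with hε
  have hε0 : 0 < ε := by positivity
  set ρ : ℝ := δ + ε with hρ
  have hρ0 : 0 < ρ := by positivity
  have h2 : ε + ε = δ / μ := by rw [hε]; field_simp; ring
  set A := ⋃ p ∈ s, ball p ε with hA
  have D : Set.Pairwise (s : Set (EuclideanSpace ℝ (Fin c)))
      (Function.onFun Disjoint fun p => ball p ε) := by
    rintro p hp q hq hpq
    apply ball_disjoint_ball
    rw [h2]
    exact hsep p hp q hq hpq
  have A_subset : A ⊆ closedBall x ρ := by
    refine iUnion₂_subset fun p hp => ?_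
    refine ball_subset_closedBall.trans (closedBall_subset_closedBall' ?_)
    have := hs p hp
    rw [hρ]; linarith
  have hd : finrank ℝ (EuclideanSpace ℝ (Fin c)) = c := finrank_euclideanSpace_fin
  have I : (s.card : ℝ≥0∞) * ENNReal.ofReal (ε ^ c) * ν (ball 0 1) ≤
      ENNReal.ofReal (ρ ^ c) * ν (ball 0 1) := by
    calc (s.card : ℝ≥0∞) * ENNReal.ofReal (ε ^ c) * ν (ball 0 1) = ν A := by
          rw [hA, measure_biUnion_finset D fun p _ => measurableSet_ball]
          simp only [ν.addHaar_ball_of_pos _ hε0, hd]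
          simp [Finset.sum_const, mul_assoc]
      _ ≤ ν (closedBall x ρ) := measure_mono A_subset
      _ = ENNReal.ofReal (ρ ^ c) * ν (ball 0 1) := by
          rw [ν.addHaar_closedBall _ hρ0.le, hd]
  have J : (s.card : ℝ≥0∞) * ENNReal.ofReal (ε ^ c) ≤ ENNReal.ofReal (ρ ^ c) :=
    (ENNReal.mul_le_mul_iff_left (measure_ball_pos _ _ zero_lt_one).ne'
      measure_ball_lt_top.ne).1 I
  have K : (s.card : ℝ) * ε ^ c ≤ ρ ^ c := by
    have h1 : ((s.card : ℝ≥0∞) * ENNReal.ofReal (ε ^ c)) =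
        ENNReal.ofReal ((s.card : ℝ) * ε ^ c) := by
      rw [ENNReal.ofReal_mul (by positivity)]
      simp
    rw [h1] at J
    exact (ENNReal.ofReal_le_ofReal_iff (by positivity)).1 J
  have hεc : 0 < ε ^ c := by positivity
  rw [← le_div_iff₀ hεc] at K
  calc (s.card : ℝ) ≤ ρ ^ c / ε ^ c := K
    _ = (ρ / ε) ^ c := (div_pow ρ ε c).symm
    _ = (1 + 2 * μ) ^ c := by
        congr 1
        rw [hρ, hε]
        field_simp
        ring

/-- **Covering property underlying blending regions.**
If `φ` is a homeomorphism of `ℝ^c` fixing `x` whose inverse is `μ`-Lipschitz on the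
closed `δ`-ball around `x`, then at most `(1 + 2μ)^c` translates of `φ(B)` (by vectors
of norm at most `δ`, the first one being zero) cover the closed `δ`-ball around `x`,
where `B` is the open `δ`-ball around `x`. -/
theorem covering_property_blending_region
    (c : ℕ) (hc : 1 ≤ c) (μ δ : ℝ) (hμ : 1 ≤ μ) (hδ : 0 < δ)
    (φ : EuclideanSpace ℝ (Fin c) ≃ₜ EuclideanSpace ℝ (Fin c))
    (x : EuclideanSpace ℝ (Fin c)) (hx : φ x = x)
    (hlip : ∀ y ∈ closedBall x δ, ∀ y' ∈ closedBall x δ,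
      ‖φ.symm y - φ.symm y'‖ ≤ μ * ‖y - y'‖) :
    ∃ (k : ℕ) (hk : 1 ≤ k) (v : Fin k → EuclideanSpace ℝ (Fin c)),
      (k : ℝ) ≤ (1 + 2 * μ) ^ c ∧
      v ⟨0, hk⟩ = 0 ∧
      (∀ i, ‖v i‖ ≤ δ) ∧
      closedBall x δ ⊆ ⋃ i, (fun y => v i + φ y) '' ball x δ := by
  classical
  have hμ0 : 0 < μ := lt_of_lt_of_le one_pos hμ
  set r : ℝ := δ / μ with hr
  have hr0 : 0 < r := by positivity
  have hrδ : r ≤ δ := by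
    rw [hr, div_le_iff₀ hμ0]; nlinarith
  have hxsymm : φ.symm x = x := by
    conv_lhs => rw [← hx]
    exact φ.symm_apply_apply x
  -- key: ball x r ⊆ φ '' ball x δ
  have hball : ball x r ⊆ φ '' ball x δ := by
    intro z hz
    refine ⟨φ.symm z, ?_, φ.apply_symm_apply z⟩
    have hz' : z ∈ closedBall x δ :=
      closedBall_subset_closedBall hrδ (ball_subset_closedBall hz)
    have hxmem : x ∈ closedBall x δ := mem_closedBall_self hδ.le
    have hle := hlip z hz' x hxmem
    rw [hxsymm] at hle
    have hzx : ‖z - x‖ < r := by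
      rw [← dist_eq_norm]; exact mem_ball.1 hz
    have hlt : ‖φ.symm z - x‖ < μ * r :=
      lt_of_le_of_lt hle ((mul_lt_mul_iff_right₀ hμ0).2 hzx)
    rw [mem_ball, dist_eq_norm]
    calc ‖φ.symm z - x‖ < μ * r := hlt
      _ = δ := by rw [hr]; field_simp
  -- the set of cardinalities of separated sets containing x
  set P : Finset (EuclideanSpace ℝ (Fin c)) → Prop := fun s =>
    x ∈ s ∧ (∀ p ∈ s, dist p x ≤ δ) ∧ ∀ p ∈ s, ∀ q ∈ s, p ≠ q → r ≤ dist p q with hP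
  set S : Set ℕ := {n | ∃ s, P s ∧ s.card = n} with hS
  have hne : S.Nonempty := by
    refine ⟨1, {x}, ⟨Finset.mem_singleton_self x, ?_, ?_⟩, Finset.card_singleton x⟩
    · intro p hp; rw [Finset.mem_singleton.1 hp]; simp [hδ.le]
    · intro p hp q hq hpq
      rw [Finset.mem_singleton.1 hp, Finset.mem_singleton.1 hq] at hpq
      exact absurd rfl hpq
  have hbdd : BddAbove S := by
    refine ⟨⌈(1 + 2 * μ) ^ c⌉₊, fun n hn => ?_⟩
    obtain ⟨s, ⟨_, hs1, hs2⟩, rfl⟩ := hn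
    have hb := packing_aux c μ δ hμ hδ x s hs1 hs2
    exact_mod_cast hb.trans (Nat.le_ceil _)
  obtain ⟨s, hPs, hcard⟩ := Nat.sSup_mem hne hbdd
  obtain ⟨hxs, hs1, hs2⟩ := hPs
  -- maximality: every point of the closed ball is within r of some point of s
  have hcover : ∀ y ∈ closedBall x δ, ∃ p ∈ s, dist y p < r := by
    intro y hy
    by_contra h
    push_neg at h
    have hys : y ∉ s := fun hys => by
      have := h y hys; simp at this; linarith
    have hmem : s.card + 1 ∈ S := by
      refine ⟨insert y s, ⟨Finset.mem_insert_of_mem hxs, ?_, ?_⟩,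
        Finset.card_insert_of_notMem hys⟩
      · intro p hp
        rcases Finset.mem_insert.1 hp with hpy | hp'
        · rw [hpy]; exact mem_closedBall.1 hy
        · exact hs1 p hp'
      · intro p hp q hq hpq
        rcases Finset.mem_insert.1 hp with hpy | hp'
        · rcases Finset.mem_insert.1 hq with hqy | hq'
          · exact absurd (hpy.trans hqy.symm) hpq
          · rw [hpy]; exact h q hq'
        · rcases Finset.mem_insert.1 hq with hqy | hq'
          · rw [hqy, dist_comm]; exact h p hp'
          · exact hs2 p hp' q hq' hpq
    have := le_csSup hbdd hmem
    omega
  -- build the family of vectors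
  set t : Finset (EuclideanSpace ℝ (Fin c)) := s.erase x with ht
  have hkcard : t.card + 1 = s.card := Finset.card_erase_add_one hxs
  refine ⟨t.card + 1, Nat.succ_le_succ (Nat.zero_le _),
    Fin.cons 0 (fun i => (t.equivFin.symm i : EuclideanSpace ℝ (Fin c)) - x),
    ?_, ?_, ?_, ?_⟩
  · have hb := packing_aux c μ δ hμ hδ x s hs1 hs2
    rw [← hkcard] at hb
    exact_mod_cast hb
  · exact Fin.cons_zero _ _
  · intro i
    refine Fin.cases ?_ (fun j => ?_) i
    · simp [hδ.le]
    · rw [Fin.cons_succ]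
      have hp : ((t.equivFin.symm j : EuclideanSpace ℝ (Fin c))) ∈ s :=
        Finset.mem_of_mem_erase (t.equivFin.symm j).2
      rw [← dist_eq_norm]
      exact hs1 _ hp
  · intro y hy
    obtain ⟨p, hp, hdist⟩ := hcover y hy
    have hyp : y - (p - x) ∈ φ '' ball x δ := by
      apply hball
      rw [mem_ball, dist_eq_norm]
      have he : y - (p - x) - x = y - p := by abel
      rw [he, ← dist_eq_norm]
      exact hdist
    obtain ⟨w, hw, hww⟩ := hyp
    by_cases hpx : p = x
    · refine mem_iUnion.2 ⟨0, ⟨w, hw, ?_⟩⟩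
      simp [Fin.cons_zero, hww, hpx]
    · have hpt : p ∈ t := Finset.mem_erase.2 ⟨hpx, hp⟩
      refine mem_iUnion.2 ⟨(t.equivFin ⟨p, hpt⟩).succ, ⟨w, hw, ?_⟩⟩
      simp only [Fin.cons_succ, Equiv.symm_apply_apply, hww]
      abel
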